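/- Let n ≥ 2, G = (Z/2)^n, and let x₁,…,x_k ∈ G be distinct with distinct values y₁,…,y_k ∈ {0,1}^{n-1}. Let W = {xᵢ ⊕ xⱼ : i < j} have cardinality m. Then the number of functions f̂ : G → {0,1}^{n-1} satisfying f̂(xᵢ) = yᵢ for all i and the promise that there exists a nonzero ŝ with f̂(x) = f̂(y) iff x = y or x = y ⊕ ŝ, is exactly (2^n − m − 1)·(2^{n-1} − k)!, and for each fixed compatible ŝ (nonzero, ∉ W) exactly (2^{n-1} − k)! of these functions satisfy the promise with that ŝ. -/
import Mathlib

open Finset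

lemma count_fixed {n k : ℕ} (hn1 : 1 ≤ n)
    (x : Fin k → (Fin n → ZMod 2)) (hx : Function.Injective x)
    (y : Fin k → (Fin (n - 1) → ZMod 2)) (hy : Function.Injective y)
    (sh : Fin n → ZMod 2) (hsh : sh ≠ 0)
    (hshW : ∀ i j, x i + x j = sh → i = j) :
    Nat.card {f : (Fin n → ZMod 2) → (Fin (n - 1) → ZMod 2) //
          (∀ i, f (x i) = y i) ∧
          (∀ a b, f a = f b ↔ a = b ∨ a = b + sh)} =
        Nat.factorial (2 ^ (n - 1) - k) := by
  classical
  obtain ⟨i0, h0⟩ := Function.ne_iff.mp hsh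
  simp only [Pi.zero_apply] at h0
  have hz : ∀ u v : ZMod 2, u ≠ 0 → v ≠ 0 → u + v = 0 := by decide
  have hz2 : ∀ u v : ZMod 2, u + v + v = u := by decide
  have hz3 : ∀ u v : ZMod 2, u = 0 → v ≠ 0 → u + v ≠ 0 := by decide
  have addsh : ∀ a : Fin n → ZMod 2, a + sh + sh = a := fun a => funext fun j => hz2 _ _
  set T := {a : Fin n → ZMod 2 // a i0 = 0} with hT
  have hmem : ∀ a : Fin n → ZMod 2, a i0 ≠ 0 → (a + sh) i0 = 0 := fun a ha => hz _ _ ha h0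
  have hmem' : ∀ a : Fin n → ZMod 2, a i0 = 0 → (a + sh) i0 ≠ 0 := fun a ha => hz3 _ _ ha h0
  set r : (Fin n → ZMod 2) → T := fun a =>
    if h : a i0 = 0 then ⟨a, h⟩ else ⟨a + sh, hmem a h⟩ with hr
  have rT : ∀ t : T, r t.val = t := fun t => by simp [hr, t.prop]
  have hswap : ∀ a b : Fin n → ZMod 2, a = b + sh → b = a + sh := by
    intro a b h; rw [h, addsh]
  have key : ∀ a b, r a = r b ↔ a = b ∨ a = b + sh := by
    intro a b
    rw [Subtype.ext_iff]
    by_cases ha : a i0 = 0 <;> by_cases hb : b i0 = 0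
    · rw [hr]; simp only [dif_pos ha, dif_pos hb]
      constructor
      · exact Or.inl
      · rintro (h | h)
        · exact h
        · exact absurd (h ▸ ha) (hmem' b hb)
    · rw [hr]; simp only [dif_pos ha, dif_neg hb]
      constructor
      · exact Or.inr
      · rintro (h | h)
        · exact absurd (h ▸ ha) hb
        · exact h
    · rw [hr]; simp only [dif_neg ha, dif_pos hb]
      constructor
      · intro h; exact Or.inr (hswap b a h.symm)
      · rintro (rfl | rfl)
        · exact absurd hb ha
        · exact addsh b
    · rw [hr]; simp only [dif_neg ha, dif_neg hb]
      constructor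
      · intro h; exact Or.inl (add_right_cancel h)
      · rintro (h | h)
        · rw [h]
        · exact absurd (hswap a b h ▸ hmem a ha) hb
  -- cardinality of T
  have hz4 : ∀ u : ZMod 2, u ≠ 0 → u = 1 := by decide
  have e2 : (Fin n → ZMod 2) ≃ T × ZMod 2 :=
    { toFun := fun a => (r a, a i0)
      invFun := fun p => p.1.val + p.2 • sh
      left_inv := by
        intro a
        by_cases ha : a i0 = 0
        · simp [hr, dif_pos ha, ha]
        · simp only [hr, dif_neg ha]
          rw [hz4 _ ha]
          simp [addsh]
      right_inv := by
        rintro ⟨t, c⟩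
        rcases (by decide : ∀ c : ZMod 2, c = 0 ∨ c = 1) c with rfl | rfl
        · simp [hr, t.prop]
        · have h1 : (t.val + sh) i0 ≠ 0 := hmem' t.val t.prop
          simp only [one_smul, Prod.mk.injEq]
          constructor
          · rw [hr]; simp only [dif_neg h1]
            exact Subtype.ext (addsh t.val)
          · rw [Pi.add_apply, t.prop, zero_add]
            exact hz4 _ h0 }
  have cardG : Fintype.card (Fin n → ZMod 2) = 2 ^ n := by
    simp [Fintype.card_fun]
  have cardT : Fintype.card T = 2 ^ (n - 1) := by
    have h := Fintype.card_congr e2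
    rw [cardG, Fintype.card_prod] at h
    have : Fintype.card (ZMod 2) = 2 := by decide
    rw [this] at h
    have hn' : 2 ^ n = 2 ^ (n - 1) * 2 := by
      rw [← pow_succ]
      congr 1
      omega
    omega
  have cardY : Fintype.card (Fin (n - 1) → ZMod 2) = 2 ^ (n - 1) := by
    simp [Fintype.card_fun]
  set t := fun i => r (x i) with ht
  have hadd2 : ∀ a b : Fin n → ZMod 2, a = b + sh → a + b = sh := fun a b h =>
    funext fun l => (by decide : ∀ u v w : ZMod 2, u = v + w → u + v = w) _ _ _
      (by rw [h]; rfl)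
  have tinj : Function.Injective t := by
    intro i j h
    rcases (key (x i) (x j)).mp h with h' | h'
    · exact hx h'
    · exact hshW i j (hadd2 _ _ h')
  -- step 1: f's biject with g's
  have step1 : Nat.card {f : (Fin n → ZMod 2) → (Fin (n - 1) → ZMod 2) //
          (∀ i, f (x i) = y i) ∧
          (∀ a b, f a = f b ↔ a = b ∨ a = b + sh)} =
      Nat.card {g : T ≃ (Fin (n - 1) → ZMod 2) // ∀ i, g (t i) = y i} := by
    apply Nat.card_congr
    symm
    apply Equiv.ofBijective (fun g => (⟨fun a => g.val (r a), fun i => g.prop i,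
      fun a b => by rw [show (g.val (r a) = g.val (r b)) ↔ r a = r b from
        ⟨fun h => g.val.injective h, fun h => by rw [h]⟩, key]⟩ :
        {f : (Fin n → ZMod 2) → (Fin (n - 1) → ZMod 2) //
          (∀ i, f (x i) = y i) ∧ (∀ a b, f a = f b ↔ a = b ∨ a = b + sh)}))
    constructor
    · intro g g' h
      have h' : ∀ a, g.val (r a) = g'.val (r a) := fun a => congrFun (congrArg Subtype.val h) a
      apply Subtype.ext; apply Equiv.ext
      intro u
      have := h' u.val
      rwa [rT u] at this
    · rintro ⟨f, hf1, hf2⟩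
      have g0inj : Function.Injective (fun u : T => f u.val) := by
        intro u u' h
        rcases (hf2 _ _).mp h with h' | h'
        · exact Subtype.ext h'
        · exact absurd (h' ▸ u.prop) (hmem' u'.val u'.prop)
      have gbij : Function.Bijective (fun u : T => f u.val) :=
        (Fintype.bijective_iff_injective_and_card _).mpr ⟨g0inj, by rw [cardT, cardY]⟩
      have hg : ∀ a, (Equiv.ofBijective _ gbij) (r a) = f a := by
        intro a
        show f (r a).val = f a
        apply (hf2 _ _).mpr
        by_cases ha : a i0 = 0
        · left; simp [hr, dif_pos ha]
        · right; simp [hr, dif_neg ha]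
      exact ⟨⟨Equiv.ofBijective _ gbij, fun i => by rw [ht]; rw [hg (x i)]; exact hf1 i⟩,
        Subtype.ext (funext fun a => hg a)⟩
  rw [step1]
  -- step 2: count the g's
  have cond_iff : ∀ e : T ≃ (Fin (n - 1) → ZMod 2),
      (∀ p : (Set.range t), e p =
        (((Equiv.ofInjective t tinj).symm.trans (Equiv.ofInjective y hy)) p : _)) ↔
      (∀ i, e (t i) = y i) := by
    intro e
    constructor
    · intro h i
      have := h ⟨t i, ⟨i, rfl⟩⟩
      rwa [Equiv.trans_apply, Equiv.ofInjective_symm_apply, Equiv.ofInjective_apply] at this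
    · rintro h ⟨-, i, rfl⟩
      rw [Equiv.trans_apply, Equiv.ofInjective_symm_apply, Equiv.ofInjective_apply]
      exact h i
  have step2 : Nat.card {g : T ≃ (Fin (n - 1) → ZMod 2) // ∀ i, g (t i) = y i} =
      Nat.card ((((Set.range t)ᶜ : Set T)) ≃ (((Set.range y)ᶜ : Set (Fin (n - 1) → ZMod 2)))) :=
    Nat.card_congr ((Equiv.subtypeEquivRight cond_iff).symm.trans
      (Equiv.Set.compl ((Equiv.ofInjective t tinj).symm.trans (Equiv.ofInjective y hy))))
  rw [step2]
  have c1 : Fintype.card ((Set.range t)ᶜ : Set T) = 2 ^ (n - 1) - k := by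
    rw [Fintype.card_compl_set, Set.card_range_of_injective tinj, Fintype.card_fin, cardT]
  have c2 : Fintype.card ((Set.range y)ᶜ : Set (Fin (n - 1) → ZMod 2)) = 2 ^ (n - 1) - k := by
    rw [Fintype.card_compl_set, Set.card_range_of_injective hy, Fintype.card_fin, cardY]
  obtain ⟨ec⟩ := Fintype.card_eq.mp (c1.trans c2.symm)
  rw [Nat.card_eq_fintype_card, Fintype.card_equiv ec, c1]

theorem stmt11 (n k m : ℕ) (hn : 2 ≤ n)
    (x : Fin k → (Fin n → ZMod 2)) (hx : Function.Injective x)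
    (y : Fin k → (Fin (n - 1) → ZMod 2)) (hy : Function.Injective y)
    (W : Finset (Fin n → ZMod 2))
    (hW : W = ((Finset.univ : Finset (Fin k × Fin k)).filter
        (fun p => p.1 < p.2)).image (fun p => x p.1 + x p.2))
    (hm : W.card = m) :
    Nat.card {f : (Fin n → ZMod 2) → (Fin (n - 1) → ZMod 2) //
        (∀ i, f (x i) = y i) ∧
        ∃ sh : Fin n → ZMod 2, sh ≠ 0 ∧
          (∀ a b, f a = f b ↔ a = b ∨ a = b + sh)} =
      (2 ^ n - m - 1) * Nat.factorial (2 ^ (n - 1) - k) ∧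
    ∀ sh : Fin n → ZMod 2, sh ≠ 0 → sh ∉ W →
      Nat.card {f : (Fin n → ZMod 2) → (Fin (n - 1) → ZMod 2) //
          (∀ i, f (x i) = y i) ∧
          (∀ a b, f a = f b ↔ a = b ∨ a = b + sh)} =
        Nat.factorial (2 ^ (n - 1) - k) := by
  classical
  have hn1 : 1 ≤ n := le_trans (by norm_num) hn
  -- sh ∉ W iff no pair sums to sh (for sh arbitrary, i ≠ j version)
  have memW : ∀ sh : Fin n → ZMod 2, (∃ i j, i ≠ j ∧ x i + x j = sh) → sh ∈ W := by
    intro sh ⟨i, j, hij, hsum⟩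
    rw [hW, Finset.mem_image]
    rcases lt_or_gt_of_ne hij with h | h
    · exact ⟨(i, j), Finset.mem_filter.mpr ⟨Finset.mem_univ _, h⟩, hsum⟩
    · exact ⟨(j, i), Finset.mem_filter.mpr ⟨Finset.mem_univ _, h⟩, by rw [add_comm]; exact hsum⟩
  have hcompat : ∀ sh : Fin n → ZMod 2, sh ∉ W → ∀ i j, x i + x j = sh → i = j := by
    intro sh hsh i j hsum
    by_contra hij
    exact hsh (memW sh ⟨i, j, hij, hsum⟩)
  have fixed := fun (sh : Fin n → ZMod 2) (h0 : sh ≠ 0) (hw : sh ∉ W) =>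
    count_fixed hn1 x hx y hy sh h0 (hcompat sh hw)
  refine ⟨?_, fixed⟩
  -- the sigma decomposition
  set A := {sh : Fin n → ZMod 2 // sh ≠ 0 ∧ sh ∉ W} with hA
  set F := fun sh : Fin n → ZMod 2 => {f : (Fin n → ZMod 2) → (Fin (n - 1) → ZMod 2) //
          (∀ i, f (x i) = y i) ∧
          (∀ a b, f a = f b ↔ a = b ∨ a = b + sh)} with hF
  have hz0 : ∀ u v : ZMod 2, u + v = 0 → u = v := by decide
  have Ψbij : Function.Bijective (fun p : Σ sh : A, F sh.val =>
      (⟨p.2.val, p.2.prop.1, p.1.val, p.1.prop.1, p.2.prop.2⟩ :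
        {f : (Fin n → ZMod 2) → (Fin (n - 1) → ZMod 2) //
        (∀ i, f (x i) = y i) ∧
        ∃ sh : Fin n → ZMod 2, sh ≠ 0 ∧
          (∀ a b, f a = f b ↔ a = b ∨ a = b + sh)})) := by
    constructor
    · rintro ⟨⟨s1, hs1⟩, ⟨f1, hf1⟩⟩ ⟨⟨s2, hs2⟩, ⟨f2, hf2⟩⟩ h
      simp only [Subtype.mk.injEq] at h
      have hss : s1 = s2 := by
        have e1 : f1 s1 = f1 0 := (hf1.2 s1 0).mpr (Or.inr (zero_add s1).symm)
        rw [h] at e1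
        rcases (hf2.2 s1 0).mp e1 with h' | h'
        · exact absurd h' hs1.1
        · rw [h', zero_add]
      subst hss
      subst h
      rfl
    · rintro ⟨f, hf1, sh, hsh0, hf2⟩
      have hshW : sh ∉ W := by
        intro hmem
        rw [hW, Finset.mem_image] at hmem
        obtain ⟨⟨i, j⟩, hij, hsum⟩ := hmem
        have hij' : i < j := (Finset.mem_filter.mp hij).2
        have : x i = x j + sh := by
          rw [← hsum]; funext l
          exact (by decide : ∀ u v : ZMod 2, u = v + (u + v)) _ _
        have : f (x i) = f (x j) := (hf2 _ _).mpr (Or.inr this)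
        rw [hf1 i, hf1 j] at this
        exact absurd (hy this) (ne_of_lt hij')
      exact ⟨⟨⟨sh, hsh0, hshW⟩, ⟨f, hf1, hf2⟩⟩, rfl⟩
  letI : ∀ sh : A, Fintype (F sh.val) := fun sh => Fintype.ofFinite _
  rw [← Nat.card_congr (Equiv.ofBijective _ Ψbij)]
  rw [Nat.card_eq_fintype_card, Fintype.card_sigma]
  have hterm : ∀ sh : A, Fintype.card (F sh.val) = Nat.factorial (2 ^ (n - 1) - k) := by
    intro sh
    rw [← Nat.card_eq_fintype_card]
    exact fixed sh.val sh.prop.1 sh.prop.2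
  rw [Finset.sum_congr rfl (fun sh _ => hterm sh), Finset.sum_const, smul_eq_mul]
  congr 1
  -- card A = 2^n - m - 1
  have h0W : (0 : Fin n → ZMod 2) ∉ W := by
    rw [hW, Finset.mem_image]
    rintro ⟨⟨i, j⟩, hij, hsum⟩
    have : x i = x j := funext fun l => hz0 _ _ (congrFun hsum l)
    exact absurd (hx this) (ne_of_lt (Finset.mem_filter.mp hij).2)
  have : Fintype.card A = (Finset.univ.filter
      (fun a : Fin n → ZMod 2 => a ≠ 0 ∧ a ∉ W)).card := Fintype.card_subtype _
  rw [Finset.card_univ, this]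
  have hfilter : (Finset.univ.filter (fun a : Fin n → ZMod 2 => a ≠ 0 ∧ a ∉ W)) =
      (insert (0 : Fin n → ZMod 2) W)ᶜ := by
    ext a
    simp [Finset.mem_compl, Finset.mem_insert, not_or, and_comm]
  rw [hfilter, Finset.card_compl, Finset.card_insert_of_notMem h0W, hm]
  have cardG : Fintype.card (Fin n → ZMod 2) = 2 ^ n := by simp [Fintype.card_fun]
  rw [cardG]
  omega
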